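/- Involutivity of conditional inversion: let F : M → M be local, increasing, and respect a.e. equality, and let G be a conditional inverse of F. Then F is a conditional inverse of G; that is, for every m ∈ M: G⁻(F(m)) ≤ m ≤ G⁺(F(m)) a.e. on {G(−∞) < m < G(+∞)}, F(m) = −∞ a.e. on {m < G(−∞)}, and F(m) = +∞ a.e. on {G(+∞) < m}, where G⁻ and G⁺ denote the left- and right-continuous versions of G. -/

import Mathlib

open MeasureTheory

variable {Ω : Type*} [MeasurableSpace Ω]

/-- `M`: the measurable functions `Ω → [-∞, ∞]`. -/
def MSp (Ω : Type*) [MeasurableSpace Ω] : Type _ := {f : Ω → EReal // Measurable f}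

/-- The constant function `+∞` as an element of `M`. -/
noncomputable def MSp.mtop (Ω : Type*) [MeasurableSpace Ω] : MSp Ω := ⟨fun _ => ⊤, measurable_const⟩

/-- The constant function `-∞` as an element of `M`. -/
noncomputable def MSp.mbot (Ω : Type*) [MeasurableSpace Ω] : MSp Ω := ⟨fun _ => ⊥, measurable_const⟩

open Classical in
/-- The pointwise piecewise combination `1_A f + 1_{Aᶜ} g`. -/
noncomputable def pcf (A : Set Ω) (f g : Ω → EReal) : Ω → EReal :=
  fun ω => if ω ∈ A then f ω else g ω

/-- The piecewise combination `1_A m + 1_{Aᶜ} n` as an element of `M`. -/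
noncomputable def MSp.pc (A : Set Ω) (hA : MeasurableSet A) (m n : MSp Ω) : MSp Ω :=
  ⟨pcf A m.1 n.1, by classical unfold pcf; exact Measurable.ite hA m.2 n.2⟩

/-- `F : M → M` respects `P`-a.e. equality. -/
def RespectsAE (P : Measure Ω) (F : MSp Ω → MSp Ω) : Prop :=
  ∀ m n : MSp Ω, m.1 =ᵐ[P] n.1 → (F m).1 =ᵐ[P] (F n).1

/-- `F : M → M` is increasing with respect to the `P`-a.e. order. -/
def IncreasingAE (P : Measure Ω) (F : MSp Ω → MSp Ω) : Prop :=
  ∀ m n : MSp Ω, m.1 ≤ᵐ[P] n.1 → (F m).1 ≤ᵐ[P] (F n).1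

/-- `F : M → M` is local: `F(1_A m + 1_{Aᶜ} n) = 1_A F(m) + 1_{Aᶜ} F(n)` a.e. -/
def LocalAE (P : Measure Ω) (F : MSp Ω → MSp Ω) : Prop :=
  ∀ (A : Set Ω) (hA : MeasurableSet A) (m n : MSp Ω),
    (F (MSp.pc A hA m n)).1 =ᵐ[P] pcf A (F m).1 (F n).1

/-- `g` is an essential infimum of the set `S ⊆ M`. -/
def IsEssInfM (P : Measure Ω) (S : Set (MSp Ω)) (g : MSp Ω) : Prop :=
  (∀ f ∈ S, g.1 ≤ᵐ[P] f.1) ∧ ∀ h : MSp Ω, (∀ f ∈ S, h.1 ≤ᵐ[P] f.1) → h.1 ≤ᵐ[P] g.1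

/-- `g` is an essential supremum of the set `S ⊆ M`. -/
def IsEssSupM (P : Measure Ω) (S : Set (MSp Ω)) (g : MSp Ω) : Prop :=
  (∀ f ∈ S, f.1 ≤ᵐ[P] g.1) ∧ ∀ h : MSp Ω, (∀ f ∈ S, f.1 ≤ᵐ[P] h.1) → g.1 ≤ᵐ[P] h.1

/-- `Gl` is a conditional left-inverse of `F`: writing `A_s = {F(+∞) ≥ s}`, one has
`Gl(s) = +∞` a.e. on `A_sᶜ` and, on `A_s`, `Gl(s)` agrees a.e. with an essential infimum
of `{ m ∈ M : F(m) ≥ s a.e. on A_s }`. -/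
def IsCondLeftInv (P : Measure Ω) (F Gl : MSp Ω → MSp Ω) : Prop :=
  ∀ s : MSp Ω,
    (∀ᵐ ω ∂P, ω ∉ {ω' | s.1 ω' ≤ (F (MSp.mtop Ω)).1 ω'} → (Gl s).1 ω = ⊤) ∧
    ∃ g : MSp Ω,
      IsEssInfM P
        {m : MSp Ω | ∀ᵐ ω ∂P, ω ∈ {ω' | s.1 ω' ≤ (F (MSp.mtop Ω)).1 ω'} →
          s.1 ω ≤ (F m).1 ω} g ∧
      ∀ᵐ ω ∂P, ω ∈ {ω' | s.1 ω' ≤ (F (MSp.mtop Ω)).1 ω'} → (Gl s).1 ω = g.1 ω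

/-- `Gr` is a conditional right-inverse of `F`: writing `B_s = {F(-∞) ≤ s}`, one has
`Gr(s) = -∞` a.e. on `B_sᶜ` and, on `B_s`, `Gr(s)` agrees a.e. with an essential supremum
of `{ m ∈ M : F(m) ≤ s a.e. on B_s }`. -/
def IsCondRightInv (P : Measure Ω) (F Gr : MSp Ω → MSp Ω) : Prop :=
  ∀ s : MSp Ω,
    (∀ᵐ ω ∂P, ω ∉ {ω' | (F (MSp.mbot Ω)).1 ω' ≤ s.1 ω'} → (Gr s).1 ω = ⊥) ∧
    ∃ g : MSp Ω,
      IsEssSupM P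
        {m : MSp Ω | ∀ᵐ ω ∂P, ω ∈ {ω' | (F (MSp.mbot Ω)).1 ω' ≤ s.1 ω'} →
          (F m).1 ω ≤ s.1 ω} g ∧
      ∀ᵐ ω ∂P, ω ∈ {ω' | (F (MSp.mbot Ω)).1 ω' ≤ s.1 ω'} → (Gr s).1 ω = g.1 ω

/-- `Fm` is a left-continuous version of `F`: `Fm(m) = -∞` a.e. on `{m = -∞}` and, on
`{m > -∞}`, `Fm(m)` agrees a.e. with an essential supremum of
`{ F(n) : n < m a.e. on {m > -∞} }`. -/
def IsLeftContVersion (P : Measure Ω) (F Fm : MSp Ω → MSp Ω) : Prop :=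
  ∀ m : MSp Ω,
    (∀ᵐ ω ∂P, m.1 ω = ⊥ → (Fm m).1 ω = ⊥) ∧
    ∃ g : MSp Ω,
      IsEssSupM P
        (F '' {n : MSp Ω | ∀ᵐ ω ∂P, ω ∈ {ω' | ⊥ < m.1 ω'} → n.1 ω < m.1 ω}) g ∧
      ∀ᵐ ω ∂P, ω ∈ {ω' | ⊥ < m.1 ω'} → (Fm m).1 ω = g.1 ω

/-- `Fp` is a right-continuous version of `F`: `Fp(m) = +∞` a.e. on `{m = +∞}` and, on
`{m < +∞}`, `Fp(m)` agrees a.e. with an essential infimum of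
`{ F(n) : n > m a.e. on {m < +∞} }`. -/
def IsRightContVersion (P : Measure Ω) (F Fp : MSp Ω → MSp Ω) : Prop :=
  ∀ m : MSp Ω,
    (∀ᵐ ω ∂P, m.1 ω = ⊤ → (Fp m).1 ω = ⊤) ∧
    ∃ g : MSp Ω,
      IsEssInfM P
        (F '' {n : MSp Ω | ∀ᵐ ω ∂P, ω ∈ {ω' | m.1 ω' < ⊤} → m.1 ω < n.1 ω}) g ∧
      ∀ᵐ ω ∂P, ω ∈ {ω' | m.1 ω' < ⊤} → (Fp m).1 ω = g.1 ω

/-- `G` is a conditional inverse of `F`: it is local, increasing, respects a.e. equality,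
and for every left-continuous version `F⁻` and right-continuous version `F⁺` of `F` and
every `s ∈ M`: `F⁻(G(s)) ≤ s ≤ F⁺(G(s))` a.e. on `{F(-∞) < s < F(+∞)}`, `G(s) = -∞` a.e.
on `{s < F(-∞)}`, and `G(s) = +∞` a.e. on `{F(+∞) < s}`. -/
def IsCondInverse (P : Measure Ω) (F G : MSp Ω → MSp Ω) : Prop :=
  LocalAE P G ∧ IncreasingAE P G ∧ RespectsAE P G ∧
  ∀ (Fm Fp : MSp Ω → MSp Ω), IsLeftContVersion P F Fm → IsRightContVersion P F Fp →
    ∀ s : MSp Ω,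
      (∀ᵐ ω ∂P, (F (MSp.mbot Ω)).1 ω < s.1 ω → s.1 ω < (F (MSp.mtop Ω)).1 ω →
        (Fm (G s)).1 ω ≤ s.1 ω ∧ s.1 ω ≤ (Fp (G s)).1 ω) ∧
      (∀ᵐ ω ∂P, s.1 ω < (F (MSp.mbot Ω)).1 ω → (G s).1 ω = ⊥) ∧
      (∀ᵐ ω ∂P, (F (MSp.mtop Ω)).1 ω < s.1 ω → (G s).1 ω = ⊤)


namespace CondInvAux

open ENNReal

variable {Ω : Type*} [MeasurableSpace Ω]

omit [MeasurableSpace Ω] in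
lemma pcf_of_mem {A : Set Ω} {f g : Ω → EReal} {ω : Ω} (h : ω ∈ A) : pcf A f g ω = f ω := by
  simp [pcf, h]

omit [MeasurableSpace Ω] in
lemma pcf_of_not_mem {A : Set Ω} {f g : Ω → EReal} {ω : Ω} (h : ω ∉ A) : pcf A f g ω = g ω := by
  simp [pcf, h]

/-- Pointwise max in `MSp`. -/
noncomputable def maxM (f g : MSp Ω) : MSp Ω := ⟨fun ω => max (f.1 ω) (g.1 ω), f.2.max g.2⟩

/-- Pointwise negation in `MSp`. -/
noncomputable def negM (f : MSp Ω) : MSp Ω := ⟨fun ω => -(f.1 ω), f.2.neg⟩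

/-- Closure of a set of measurable functions under binary pointwise max. -/
inductive MaxCl (S : Set (MSp Ω)) : MSp Ω → Prop where
  | base {f} : f ∈ S → MaxCl S f
  | max {f g} : MaxCl S f → MaxCl S g → MaxCl S (maxM f g)

/-- A bounded strictly monotone function `EReal → ℝ`. -/
noncomputable def er (x : EReal) : ℝ :=
  if x = ⊥ then -2 else if x = ⊤ then 2 else Real.arctan x.toReal

lemma pi_div_two_lt_two : Real.pi / 2 < 2 := by
  have := Real.pi_lt_d2
  linarith

lemma arctan_bounds (t : ℝ) : -2 < Real.arctan t ∧ Real.arctan t < 2 := by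
  have h1 := Real.arctan_lt_pi_div_two t
  have h2 := Real.neg_pi_div_two_lt_arctan t
  have h3 := pi_div_two_lt_two
  constructor <;> linarith

lemma er_le_two (x : EReal) : er x ≤ 2 := by
  unfold er; split_ifs with h1 h2
  · norm_num
  · exact le_refl 2
  · exact (arctan_bounds _).2.le

lemma neg_two_le_er (x : EReal) : -2 ≤ er x := by
  unfold er; split_ifs with h1 h2
  · exact le_refl _
  · norm_num
  · exact (arctan_bounds _).1.le

lemma er_strictMono : StrictMono er := by
  intro x y hxy
  unfold er
  rcases eq_or_ne x ⊥ with hx | hx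
  · subst hx
    have hy : y ≠ ⊥ := hxy.ne'
    rw [if_pos rfl, if_neg hy]
    split_ifs with h2
    · norm_num
    · exact (arctan_bounds _).1
  · have hxt : x ≠ ⊤ := (hxy.trans_le le_top).ne
    have hy : y ≠ ⊥ := fun h => hx (le_bot_iff.mp (h ▸ hxy.le))
    rw [if_neg hx, if_neg hxt]
    rcases eq_or_ne y ⊤ with hyt | hyt
    · subst hyt
      rw [if_neg hy]
      norm_num
      exact (arctan_bounds _).2
    · rw [if_neg hy, if_neg hyt]
      apply Real.arctan_strictMono
      have hx' : ((x.toReal : EReal)) = x := EReal.coe_toReal hxt hx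
      have hy' : ((y.toReal : EReal)) = y := EReal.coe_toReal hyt hy
      rw [← EReal.coe_lt_coe_iff, hx', hy']
      exact hxy

lemma er_measurable : Measurable er := by
  unfold er
  refine Measurable.ite (measurableSet_eq) measurable_const ?_
  exact Measurable.ite (measurableSet_eq) measurable_const
    (Real.continuous_arctan.measurable.comp measurable_ereal_toReal)

/-- A bounded strictly monotone measurable transform `EReal → ℝ≥0∞`. -/
noncomputable def ee (x : EReal) : ℝ≥0∞ := ENNReal.ofReal (er x + 2)

lemma ee_le_four (x : EReal) : ee x ≤ 4 := by
  unfold ee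
  have h : er x + 2 ≤ 4 := by have := er_le_two x; linarith
  calc ENNReal.ofReal (er x + 2) ≤ ENNReal.ofReal 4 := ENNReal.ofReal_le_ofReal h
  _ = 4 := by norm_num

lemma ee_mono : Monotone ee := by
  intro x y h
  exact ENNReal.ofReal_le_ofReal (by have := er_strictMono.monotone h; linarith)

lemma ee_lt_of_lt {x y : EReal} (h : x < y) : ee x < ee y := by
  unfold ee
  rw [ENNReal.ofReal_lt_ofReal_iff]
  · have := er_strictMono h; linarith
  · have h1 := neg_two_le_er x
    have h2 := er_strictMono h
    linarith

lemma ee_measurable : Measurable ee :=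
  ENNReal.measurable_ofReal.comp (er_measurable.add measurable_const)

lemma ee_ne_top (x : EReal) : ee x ≠ ⊤ := (lt_of_le_of_lt (ee_le_four x) (by norm_num)).ne

end CondInvAux

namespace CondInvAux

open ENNReal MeasureTheory

variable {Ω : Type*} [MeasurableSpace Ω]

noncomputable def IE (P : Measure Ω) (f : MSp Ω) : ℝ≥0∞ := ∫⁻ ω, ee (f.1 ω) ∂P

lemma IE_le_four (P : Measure Ω) [IsProbabilityMeasure P] (f : MSp Ω) : IE P f ≤ 4 := by
  calc IE P f ≤ ∫⁻ _, 4 ∂P := lintegral_mono fun ω => ee_le_four _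
  _ = 4 := by simp

lemma IE_mono {P : Measure Ω} {f g : MSp Ω} (h : ∀ ω, f.1 ω ≤ g.1 ω) : IE P f ≤ IE P g :=
  lintegral_mono fun ω => ee_mono (h ω)

theorem exists_essSupM (P : Measure Ω) [IsProbabilityMeasure P] (S : Set (MSp Ω))
    (hS : S.Nonempty) : ∃ g : MSp Ω, IsEssSupM P S g := by
  obtain ⟨f₀, hf₀⟩ := hS
  set α := ⨆ (h : MSp Ω) (_ : MaxCl S h), IE P h with hα
  have hIE_le : ∀ h, MaxCl S h → IE P h ≤ α := fun h hh =>
    le_iSup₂ (f := fun (h : MSp Ω) (_ : MaxCl S h) => IE P h) h hh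
  have hα_le : α ≤ 4 := iSup₂_le fun h _ => IE_le_four P h
  have hα_top : α ≠ ⊤ := (lt_of_le_of_lt hα_le (by norm_num)).ne
  have hseq : ∀ n : ℕ, ∃ h, MaxCl S h ∧ α ≤ IE P h + ((n : ℝ≥0∞) + 1)⁻¹ := by
    intro n
    rcases eq_or_ne α 0 with h0 | h0
    · exact ⟨f₀, MaxCl.base hf₀, by simp [h0]⟩
    · have hinv : ((n : ℝ≥0∞) + 1)⁻¹ ≠ 0 := by
        exact ENNReal.inv_ne_zero.mpr <| ENNReal.add_ne_top.mpr ⟨ENNReal.natCast_ne_top n, one_ne_top⟩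
      have hlt : α - ((n : ℝ≥0∞) + 1)⁻¹ < α := ENNReal.sub_lt_self hα_top h0 hinv
      rw [hα] at hlt
      obtain ⟨h, hx⟩ := lt_iSup_iff.mp hlt
      obtain ⟨hh, h2⟩ := lt_iSup_iff.mp hx
      exact ⟨h, hh, tsub_le_iff_right.mp h2.le⟩
  choose u hu1 hu2 using hseq
  let H : ℕ → MSp Ω := fun n => Nat.rec (u 0) (fun n Hn => maxM Hn (u (n + 1))) n
  have hHcl : ∀ n, MaxCl S (H n) := by
    intro n; induction n with
    | zero => exact hu1 0
    | succ n ih => exact MaxCl.max ih (hu1 (n + 1))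
  have hHu : ∀ n ω, (u n).1 ω ≤ (H n).1 ω := by
    intro n ω; cases n with
    | zero => exact le_refl _
    | succ n => exact le_max_right _ _
  set g : MSp Ω := ⟨fun ω => ⨆ n, (H n).1 ω, Measurable.iSup (fun n => (H n).2)⟩ with hg
  have hHg : ∀ n ω, (H n).1 ω ≤ g.1 ω := fun n ω => le_iSup (fun n => (H n).1 ω) n
  have hαseq : ∀ n, α ≤ IE P (H n) + ((n : ℝ≥0∞) + 1)⁻¹ := fun n =>
    (hu2 n).trans (add_le_add_left (IE_mono (hHu n)) _)
  have hub : ∀ f ∈ S, f.1 ≤ᵐ[P] g.1 := by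
    intro f hf
    by_contra hc
    set Z := {ω | g.1 ω < f.1 ω} with hZ
    have hZm : MeasurableSet Z := measurableSet_lt g.2 f.2
    have hPZ : P Z ≠ 0 := by
      intro h0
      apply hc
      have h1 : ∀ᵐ ω ∂P, ¬ (g.1 ω < f.1 ω) := by
        rw [ae_iff]; simpa using h0
      filter_upwards [h1] with ω h; exact not_lt.mp h
    set d : Ω → ℝ≥0∞ := Z.indicator (fun ω => ee (f.1 ω) - ee (g.1 ω)) with hd
    have hdm : Measurable d :=
      (((ee_measurable.comp f.2)).sub (ee_measurable.comp g.2)).indicator hZm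
    set δ := ∫⁻ ω, d ω ∂P with hδ
    have key : ∀ n, IE P (H n) + δ ≤ α := by
      intro n
      have hpt : ∀ ω, ee ((H n).1 ω) + d ω ≤ ee ((maxM f (H n)).1 ω) := by
        intro ω
        by_cases hω : ω ∈ Z
        · have h1 : (H n).1 ω ≤ g.1 ω := hHg n ω
          have h2 : g.1 ω < f.1 ω := hω
          have hmax : (maxM f (H n)).1 ω = f.1 ω := max_eq_left (h1.trans h2.le)
          rw [hmax, hd, Set.indicator_of_mem hω]
          have hee1 : ee ((H n).1 ω) ≤ ee (g.1 ω) := ee_mono h1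
          have hee2 : ee (g.1 ω) ≤ ee (f.1 ω) := ee_mono h2.le
          calc ee ((H n).1 ω) + (ee (f.1 ω) - ee (g.1 ω))
              ≤ ee (g.1 ω) + (ee (f.1 ω) - ee (g.1 ω)) := by gcongr
            _ = ee (f.1 ω) := by rw [add_comm]; exact tsub_add_cancel_of_le hee2
        · rw [hd, Set.indicator_of_notMem hω, add_zero]
          exact ee_mono (le_max_right _ _)
      have heq : IE P (H n) + δ = ∫⁻ ω, (ee ((H n).1 ω) + d ω) ∂P :=
        (lintegral_add_left (ee_measurable.comp (H n).2) d).symm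
      rw [heq]
      exact le_trans (lintegral_mono hpt) (hIE_le _ (MaxCl.max (MaxCl.base hf) (hHcl n)))
    have hαδ : α + δ ≤ α := by
      apply ENNReal.le_of_forall_pos_le_add
      intro ε hε _
      obtain ⟨k, hk⟩ := ENNReal.exists_inv_nat_lt (by exact_mod_cast hε.ne' : (ε : ℝ≥0∞) ≠ 0)
      have hk1 : ((k : ℝ≥0∞) + 1)⁻¹ ≤ (ε : ℝ≥0∞) := by
        refine le_trans ?_ hk.le
        exact ENNReal.inv_le_inv.mpr le_self_add
      calc α + δ ≤ (IE P (H k) + ((k : ℝ≥0∞) + 1)⁻¹) + δ := by gcongr; exact hαseq k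
        _ = (IE P (H k) + δ) + ((k : ℝ≥0∞) + 1)⁻¹ := by ring
        _ ≤ α + ε := add_le_add (key k) hk1
    have hδ0 : δ = 0 := by
      by_contra hδ0
      exact absurd hαδ (not_le.mpr (ENNReal.lt_add_right hα_top hδ0))
    have hd0 : ∀ᵐ ω ∂P, d ω = 0 := (lintegral_eq_zero_iff hdm).mp hδ0.symm.symm
    have : ∀ᵐ ω ∂P, ω ∉ Z := by
      filter_upwards [hd0] with ω h hωZ
      rw [hd, Set.indicator_of_mem hωZ] at h
      exact absurd h (tsub_pos_iff_lt.mpr (ee_lt_of_lt hωZ)).ne'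
    have h2 := ae_iff.mp this
    rw [show {a | ¬ a ∉ Z} = Z from Set.ext fun a => not_not] at h2
    exact hPZ h2
  refine ⟨g, hub, ?_⟩
  intro b hb
  have hcl : ∀ h, MaxCl S h → h.1 ≤ᵐ[P] b.1 := by
    intro h hh
    induction hh with
    | base hf => exact hb _ hf
    | max h1 h2 ih1 ih2 => filter_upwards [ih1, ih2] with ω v1 v2; exact max_le v1 v2
  have hall : ∀ᵐ ω ∂P, ∀ n, (H n).1 ω ≤ b.1 ω := ae_all_iff.mpr fun n => hcl _ (hHcl n)
  filter_upwards [hall] with ω hω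
  exact iSup_le hω

theorem exists_essInfM (P : Measure Ω) [IsProbabilityMeasure P] (S : Set (MSp Ω))
    (hS : S.Nonempty) : ∃ g : MSp Ω, IsEssInfM P S g := by
  obtain ⟨g, hg1, hg2⟩ := exists_essSupM P (negM '' S) (hS.image _)
  refine ⟨negM g, ?_, ?_⟩
  · intro f hf
    have := hg1 (negM f) ⟨f, hf, rfl⟩
    filter_upwards [this] with ω h
    have : -(g.1 ω) ≤ -(-(f.1 ω)) := EReal.neg_le_neg_iff.mpr h
    simpa [negM] using this
  · intro h hh
    have hub : ∀ f' ∈ negM '' S, f'.1 ≤ᵐ[P] (negM h).1 := by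
      rintro f' ⟨f, hf, rfl⟩
      filter_upwards [hh f hf] with ω hω
      exact EReal.neg_le_neg_iff.mpr hω
    have := hg2 (negM h) hub
    filter_upwards [this] with ω hω
    have := EReal.neg_le_neg_iff.mpr hω
    simpa [negM] using this

end CondInvAux

namespace CondInvAux

open MeasureTheory

variable {Ω : Type*} [MeasurableSpace Ω]

/-- A point strictly between `a` and `b` whenever `a < b`. -/
noncomputable def emid (a b : EReal) : EReal :=
  if a = ⊥ then (if b = ⊤ then 0 else ((b.toReal - 1 : ℝ) : EReal))
  else if b = ⊤ then ((a.toReal + 1 : ℝ) : EReal)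
  else (((a.toReal + b.toReal) / 2 : ℝ) : EReal)

lemma emid_lt {a b : EReal} (h : a < b) : a < emid a b ∧ emid a b < b := by
  unfold emid
  rcases eq_or_ne a ⊥ with ha | ha
  · subst ha; rw [if_pos rfl]
    rcases eq_or_ne b ⊤ with hb | hb
    · subst hb; rw [if_pos rfl]
      constructor
      · exact EReal.coe_zero ▸ EReal.bot_lt_coe 0
      · exact EReal.coe_zero ▸ EReal.coe_lt_top 0
    · rw [if_neg hb]
      have hbb : b ≠ ⊥ := h.ne'
      have hb' : ((b.toReal : EReal)) = b := EReal.coe_toReal hb hbb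
      refine ⟨EReal.bot_lt_coe _, ?_⟩
      calc ((b.toReal - 1 : ℝ) : EReal) < (b.toReal : EReal) := EReal.coe_lt_coe_iff.mpr (by linarith)
        _ = b := hb'
  · have hat : a ≠ ⊤ := (h.trans_le le_top).ne
    have ha' : ((a.toReal : EReal)) = a := EReal.coe_toReal hat ha
    rw [if_neg ha]
    rcases eq_or_ne b ⊤ with hb | hb
    · subst hb; rw [if_pos rfl]
      refine ⟨?_, EReal.coe_lt_top _⟩
      calc a = (a.toReal : EReal) := ha'.symm
        _ < ((a.toReal + 1 : ℝ) : EReal) := EReal.coe_lt_coe_iff.mpr (by linarith)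
    · rw [if_neg hb]
      have hbb : b ≠ ⊥ := fun hb0 => ha (le_bot_iff.mp (hb0 ▸ h.le))
      have hb' : ((b.toReal : EReal)) = b := EReal.coe_toReal hb hbb
      have hab : a.toReal < b.toReal := by rw [← EReal.coe_lt_coe_iff, ha', hb']; exact h
      constructor
      · calc a = (a.toReal : EReal) := ha'.symm
          _ < (((a.toReal + b.toReal) / 2 : ℝ) : EReal) := EReal.coe_lt_coe_iff.mpr (by linarith)
      · calc (((a.toReal + b.toReal) / 2 : ℝ) : EReal) < (b.toReal : EReal) :=
            EReal.coe_lt_coe_iff.mpr (by linarith)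
          _ = b := hb'

lemma emid_measurable_comp {f g : Ω → EReal} (hf : Measurable f) (hg : Measurable g) :
    Measurable fun ω => emid (f ω) (g ω) := by
  unfold emid
  classical
  refine Measurable.ite (hf (measurableSet_singleton ⊥)) ?_ ?_
  · exact Measurable.ite (hg (measurableSet_singleton ⊤)) measurable_const
      (measurable_coe_real_ereal.comp ((measurable_ereal_toReal.comp hg).sub measurable_const))
  · refine Measurable.ite (hg (measurableSet_singleton ⊤)) ?_ ?_
    · exact measurable_coe_real_ereal.comp ((measurable_ereal_toReal.comp hf).add measurable_const)
    · exact measurable_coe_real_ereal.comp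
        (((measurable_ereal_toReal.comp hf).add (measurable_ereal_toReal.comp hg)).div_const 2)

open Classical in
/-- `tleft n c` equals a point strictly between `n` and `c` wherever `n < c`, and `n` elsewhere. -/
noncomputable def tleft (n c : MSp Ω) : MSp Ω :=
  ⟨fun ω => if n.1 ω < c.1 ω then emid (n.1 ω) (c.1 ω) else n.1 ω,
    Measurable.ite (measurableSet_lt n.2 c.2) (emid_measurable_comp n.2 c.2) n.2⟩

lemma tleft_ge (n c : MSp Ω) (ω : Ω) : n.1 ω ≤ (tleft n c).1 ω := by
  show n.1 ω ≤ if n.1 ω < c.1 ω then emid (n.1 ω) (c.1 ω) else n.1 ω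
  split_ifs with h
  · exact (emid_lt h).1.le
  · exact le_refl _

lemma tleft_between {n c : MSp Ω} {ω : Ω} (h : n.1 ω < c.1 ω) :
    n.1 ω < (tleft n c).1 ω ∧ (tleft n c).1 ω < c.1 ω := by
  have he : (tleft n c).1 ω = emid (n.1 ω) (c.1 ω) := if_pos h
  rw [he]
  exact emid_lt h

open Classical in
/-- `tright c n` equals a point strictly between `c` and `n` wherever `c < n`, and `n` elsewhere. -/
noncomputable def tright (c n : MSp Ω) : MSp Ω :=
  ⟨fun ω => if c.1 ω < n.1 ω then emid (c.1 ω) (n.1 ω) else n.1 ω,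
    Measurable.ite (measurableSet_lt c.2 n.2) (emid_measurable_comp c.2 n.2) n.2⟩

lemma tright_le (c n : MSp Ω) (ω : Ω) : (tright c n).1 ω ≤ n.1 ω := by
  show (if c.1 ω < n.1 ω then emid (c.1 ω) (n.1 ω) else n.1 ω) ≤ n.1 ω
  split_ifs with h
  · exact (emid_lt h).2.le
  · exact le_refl _

lemma tright_between {c n : MSp Ω} {ω : Ω} (h : c.1 ω < n.1 ω) :
    c.1 ω < (tright c n).1 ω ∧ (tright c n).1 ω < n.1 ω := by
  have he : (tright c n).1 ω = emid (c.1 ω) (n.1 ω) := if_pos h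
  rw [he]
  exact emid_lt h

lemma localAE_restrict {P : Measure Ω} {F : MSp Ω → MSp Ω} (hloc : LocalAE P F)
    {A : Set Ω} (hA : MeasurableSet A) (m n : MSp Ω) :
    ∀ᵐ ω ∂P, ω ∈ A → (F (MSp.pc A hA m n)).1 ω = (F m).1 ω := by
  filter_upwards [hloc A hA m n] with ω h hω
  rw [h, pcf_of_mem hω]

theorem exists_leftContVersion (P : Measure Ω) [IsProbabilityMeasure P] (F : MSp Ω → MSp Ω) :
    ∃ Fm, IsLeftContVersion P F Fm := by
  have hex : ∀ m : MSp Ω, ∃ g, IsEssSupM P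
      (F '' {n : MSp Ω | ∀ᵐ ω ∂P, ω ∈ {ω' | ⊥ < m.1 ω'} → n.1 ω < m.1 ω}) g := by
    intro m
    have hmem : MSp.mbot Ω ∈ {n : MSp Ω | ∀ᵐ ω ∂P, ω ∈ {ω' | ⊥ < m.1 ω'} → n.1 ω < m.1 ω} := by
      show ∀ᵐ ω ∂P, ω ∈ {ω' | ⊥ < m.1 ω'} → (MSp.mbot Ω).1 ω < m.1 ω
      exact Filter.Eventually.of_forall fun ω hω => hω
    exact exists_essSupM P _ ⟨F (MSp.mbot Ω), ⟨MSp.mbot Ω, hmem, rfl⟩⟩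
  choose g hg using hex
  refine ⟨fun m => MSp.pc {ω' | ⊥ < m.1 ω'} (measurableSet_lt measurable_const m.2)
    (g m) (MSp.mbot Ω), fun m => ⟨?_, g m, hg m, ?_⟩⟩
  · refine Filter.Eventually.of_forall fun ω hω => ?_
    show pcf _ _ _ ω = ⊥
    rw [pcf_of_not_mem (by simp [hω])]
    rfl
  · refine Filter.Eventually.of_forall fun ω hω => ?_
    show pcf _ _ _ ω = (g m).1 ω
    rw [pcf_of_mem hω]

theorem exists_rightContVersion (P : Measure Ω) [IsProbabilityMeasure P] (F : MSp Ω → MSp Ω) :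
    ∃ Fp, IsRightContVersion P F Fp := by
  have hex : ∀ m : MSp Ω, ∃ g, IsEssInfM P
      (F '' {n : MSp Ω | ∀ᵐ ω ∂P, ω ∈ {ω' | m.1 ω' < ⊤} → m.1 ω < n.1 ω}) g := by
    intro m
    have hmem : MSp.mtop Ω ∈ {n : MSp Ω | ∀ᵐ ω ∂P, ω ∈ {ω' | m.1 ω' < ⊤} → m.1 ω < n.1 ω} := by
      show ∀ᵐ ω ∂P, ω ∈ {ω' | m.1 ω' < ⊤} → m.1 ω < (MSp.mtop Ω).1 ω
      exact Filter.Eventually.of_forall fun ω hω => hω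
    exact exists_essInfM P _ ⟨F (MSp.mtop Ω), ⟨MSp.mtop Ω, hmem, rfl⟩⟩
  choose g hg using hex
  refine ⟨fun m => MSp.pc {ω' | m.1 ω' < ⊤} (measurableSet_lt m.2 measurable_const)
    (g m) (MSp.mtop Ω), fun m => ⟨?_, g m, hg m, ?_⟩⟩
  · refine Filter.Eventually.of_forall fun ω hω => ?_
    show pcf _ _ _ ω = ⊤
    rw [pcf_of_not_mem (by simp [hω])]
    rfl
  · refine Filter.Eventually.of_forall fun ω hω => ?_
    show pcf _ _ _ ω = (g m).1 ω
    rw [pcf_of_mem hω]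

end CondInvAux

open CondInvAux

/-- Involutivity of conditional inversion: if `F : M → M` is local, increasing and
respects a.e. equality and `G` is a conditional inverse of `F`, then `F` is a conditional
inverse of `G`. -/
theorem condInverse_involutive (P : Measure Ω) [IsProbabilityMeasure P]
    (F G : MSp Ω → MSp Ω)
    (hFloc : LocalAE P F) (hFinc : IncreasingAE P F) (hFae : RespectsAE P F)
    (hG : IsCondInverse P F G) :
    IsCondInverse P G F := by
  obtain ⟨hGloc, hGinc, hGae, hGinv⟩ := hG
  obtain ⟨Fm, hFm⟩ := exists_leftContVersion P F
  obtain ⟨Fp, hFp⟩ := exists_rightContVersion P F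
  have hinv := hGinv Fm Fp hFm hFp
  refine ⟨hFloc, hFinc, hFae, ?_⟩
  intro Gm Gp hGm hGp m
  have hFbot_le : ∀ k : MSp Ω, (F (MSp.mbot Ω)).1 ≤ᵐ[P] (F k).1 :=
    fun k => hFinc _ _ (Filter.Eventually.of_forall fun ω => bot_le)
  have hFtop_ge : ∀ k : MSp Ω, (F k).1 ≤ᵐ[P] (F (MSp.mtop Ω)).1 :=
    fun k => hFinc _ _ (Filter.Eventually.of_forall fun ω => le_top)
  have hGmono : ∀ k l : MSp Ω, (∀ ω, k.1 ω ≤ l.1 ω) → (G k).1 ≤ᵐ[P] (G l).1 :=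
    fun k l h => hGinc _ _ (Filter.Eventually.of_forall h)
  -- Core lemma (left): if the left-continuous version of `F` at `G t` lies below `t`
  -- and `t < F m`, then `G t ≤ m`.
  have Gle_of : ∀ t : MSp Ω, ∀ᵐ ω ∂P,
      (Fm (G t)).1 ω ≤ t.1 ω → t.1 ω < (F m).1 ω → (G t).1 ω ≤ m.1 ω := by
    intro t
    have hE : MeasurableSet {ω | m.1 ω < (G t).1 ω} := measurableSet_lt m.2 (G t).2
    set n' := MSp.pc {ω | m.1 ω < (G t).1 ω} hE m (MSp.mbot Ω) with hn'def
    have hn'mem : ∀ᵐ ω ∂P, ω ∈ {ω' | ⊥ < (G t).1 ω'} → n'.1 ω < (G t).1 ω := by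
      refine Filter.Eventually.of_forall fun ω hω => ?_
      by_cases hωE : ω ∈ {ω | m.1 ω < (G t).1 ω}
      · rw [show n'.1 ω = m.1 ω from pcf_of_mem hωE]; exact hωE
      · rw [show n'.1 ω = (MSp.mbot Ω).1 ω from pcf_of_not_mem hωE]; exact hω
    obtain ⟨gg, hgg, hggeq⟩ := (hFm (G t)).2
    have hFle : (F n').1 ≤ᵐ[P] gg.1 := hgg.1 (F n') ⟨n', hn'mem, rfl⟩
    have hFn' := localAE_restrict hFloc hE m (MSp.mbot Ω)
    filter_upwards [hFle, hFn', hggeq] with ω h1 h2 h3 hle hlt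
    by_contra hc
    have hωE : ω ∈ {ω | m.1 ω < (G t).1 ω} := not_le.mp hc
    have hbot : ω ∈ {ω' | ⊥ < (G t).1 ω'} := show (⊥:EReal) < (G t).1 ω from lt_of_le_of_lt bot_le hωE
    have hcontra : (F m).1 ω ≤ t.1 ω := by
      calc (F m).1 ω = (F n').1 ω := (h2 hωE).symm
        _ ≤ gg.1 ω := h1
        _ = (Fm (G t)).1 ω := (h3 hbot).symm
        _ ≤ t.1 ω := hle
    exact absurd hlt (not_lt.mpr hcontra)
  -- Core lemma (right)
  have Gge_of : ∀ t : MSp Ω, ∀ᵐ ω ∂P,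
      t.1 ω ≤ (Fp (G t)).1 ω → (F m).1 ω < t.1 ω → m.1 ω ≤ (G t).1 ω := by
    intro t
    have hE : MeasurableSet {ω | (G t).1 ω < m.1 ω} := measurableSet_lt (G t).2 m.2
    set n' := MSp.pc {ω | (G t).1 ω < m.1 ω} hE m (MSp.mtop Ω) with hn'def
    have hn'mem : ∀ᵐ ω ∂P, ω ∈ {ω' | (G t).1 ω' < ⊤} → (G t).1 ω < n'.1 ω := by
      refine Filter.Eventually.of_forall fun ω hω => ?_
      by_cases hωE : ω ∈ {ω | (G t).1 ω < m.1 ω}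
      · rw [show n'.1 ω = m.1 ω from pcf_of_mem hωE]; exact hωE
      · rw [show n'.1 ω = (MSp.mtop Ω).1 ω from pcf_of_not_mem hωE]; exact hω
    obtain ⟨gg, hgg, hggeq⟩ := (hFp (G t)).2
    have hFge : gg.1 ≤ᵐ[P] (F n').1 := hgg.1 (F n') ⟨n', hn'mem, rfl⟩
    have hFn' := localAE_restrict hFloc hE m (MSp.mtop Ω)
    filter_upwards [hFge, hFn', hggeq] with ω h1 h2 h3 hle hlt
    by_contra hc
    have hωE : ω ∈ {ω | (G t).1 ω < m.1 ω} := not_le.mp hc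
    have htop : ω ∈ {ω' | (G t).1 ω' < ⊤} := show (G t).1 ω < (⊤:EReal) from lt_of_lt_of_le hωE le_top
    have hcontra : t.1 ω ≤ (F m).1 ω := by
      calc t.1 ω ≤ (Fp (G t)).1 ω := hle
        _ = gg.1 ω := h3 htop
        _ ≤ (F n').1 ω := h1
        _ = (F m).1 ω := h2 hωE
    exact absurd hlt (not_lt.mpr hcontra)
  -- Clause 2: on `{m < G ⊥}`, `F m = ⊥`.
  have clause2 : ∀ᵐ ω ∂P, m.1 ω < (G (MSp.mbot Ω)).1 ω → (F m).1 ω = ⊥ := by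
    set s₀ : MSp Ω := ⟨fun ω => emid ⊥ ((F m).1 ω),
      emid_measurable_comp measurable_const (F m).2⟩ with hs₀
    have hb := (hinv (MSp.mbot Ω)).2.1
    have h1 := (hinv s₀).1
    have hmono : (G (MSp.mbot Ω)).1 ≤ᵐ[P] (G s₀).1 := hGmono _ _ fun ω => bot_le
    have hgle := Gle_of s₀
    have hft := hFtop_ge m
    filter_upwards [hb, h1, hmono, hgle, hft] with ω hb h1 hmono hgle hft hlt
    by_contra hne
    have hFmbot : ⊥ < (F m).1 ω := bot_lt_iff_ne_bot.mpr hne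
    have hmid := emid_lt hFmbot
    have hFbot : (F (MSp.mbot Ω)).1 ω = ⊥ := by
      by_contra hne2
      have h0 := hb (bot_lt_iff_ne_bot.mpr hne2)
      rw [h0] at hlt
      exact not_lt_bot hlt
    have h1' := h1 (by rw [hFbot]; exact hmid.1) (lt_of_lt_of_le hmid.2 hft)
    have hfin := hgle h1'.1 hmid.2
    exact absurd hlt (not_lt.mpr (hmono.trans hfin))
  -- Clause 3: on `{G ⊤ < m}`, `F m = ⊤`.
  have clause3 : ∀ᵐ ω ∂P, (G (MSp.mtop Ω)).1 ω < m.1 ω → (F m).1 ω = ⊤ := by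
    set s₀ : MSp Ω := ⟨fun ω => emid ((F m).1 ω) ⊤,
      emid_measurable_comp (F m).2 measurable_const⟩ with hs₀
    have hb := (hinv (MSp.mtop Ω)).2.2
    have h1 := (hinv s₀).1
    have hmono : (G s₀).1 ≤ᵐ[P] (G (MSp.mtop Ω)).1 := hGmono _ _ fun ω => le_top
    have hgge := Gge_of s₀
    have hfb := hFbot_le m
    filter_upwards [hb, h1, hmono, hgge, hfb] with ω hb h1 hmono hgge hfb hlt
    by_contra hne
    have hFmtop : (F m).1 ω < ⊤ := lt_top_iff_ne_top.mpr hne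
    have hmid := emid_lt hFmtop
    have hFtop : (F (MSp.mtop Ω)).1 ω = ⊤ := by
      by_contra hne2
      have h0 := hb (lt_top_iff_ne_top.mpr hne2)
      rw [h0] at hlt
      exact not_top_lt hlt
    have h1' := h1 (lt_of_le_of_lt hfb hmid.1) (by rw [hFtop]; exact hmid.2)
    have hfin := hgge h1'.2 hmid.1
    exact absurd hlt (not_lt.mpr (hfin.trans hmono))
  -- Clause 1, left half: on `{G ⊥ < m < G ⊤}`, `Gm (F m) ≤ m`.
  have clause1L : ∀ᵐ ω ∂P, (G (MSp.mbot Ω)).1 ω < m.1 ω → m.1 ω < (G (MSp.mtop Ω)).1 ω →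
      (Gm (F m)).1 ω ≤ m.1 ω := by
    obtain ⟨gL, hgL, hgLeq⟩ := (hGm (F m)).2
    have hGmbot := (hGm (F m)).1
    set U : Set Ω := ({ω | (G (MSp.mbot Ω)).1 ω < m.1 ω} ∩
      {ω | m.1 ω < (G (MSp.mtop Ω)).1 ω}) ∩ {ω | ⊥ < (F m).1 ω} with hU
    have hUm : MeasurableSet U :=
      ((measurableSet_lt (G _).2 m.2).inter (measurableSet_lt m.2 (G _).2)).inter
        (measurableSet_lt measurable_const (F m).2)
    set hub : MSp Ω := MSp.pc U hUm m (MSp.mtop Ω) with hubdef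
    have hbound : ∀ f' ∈ G ''
        {n : MSp Ω | ∀ᵐ ω ∂P, ω ∈ {ω' | ⊥ < (F m).1 ω'} → n.1 ω < (F m).1 ω},
        f'.1 ≤ᵐ[P] hub.1 := by
      rintro f' ⟨n, hn, rfl⟩
      have hGnt : (G n).1 ≤ᵐ[P] (G (tleft n (F m))).1 := hGmono _ _ (tleft_ge n (F m))
      have h1t := (hinv (tleft n (F m))).1
      have hgle := Gle_of (tleft n (F m))
      have hnbot := (hinv n).2.1
      have hft := hFtop_ge m
      filter_upwards [hn, hGnt, h1t, hgle, hnbot, hft] with ω hn hGnt h1t hgle hnbot hft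
      by_cases hωU : ω ∈ U
      · rw [show hub.1 ω = m.1 ω from pcf_of_mem hωU]
        have hFmpos : ⊥ < (F m).1 ω := hωU.2
        have hnF : n.1 ω < (F m).1 ω := hn hFmpos
        rcases lt_or_ge (n.1 ω) ((F (MSp.mbot Ω)).1 ω) with hcase | hcase
        · rw [hnbot hcase]; exact bot_le
        · have hbt := tleft_between hnF
          have hlow : (F (MSp.mbot Ω)).1 ω < (tleft n (F m)).1 ω := lt_of_le_of_lt hcase hbt.1
          have hhigh : (tleft n (F m)).1 ω < (F (MSp.mtop Ω)).1 ω := lt_of_lt_of_le hbt.2 hft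
          have h1t' := h1t hlow hhigh
          exact le_trans hGnt (hgle h1t'.1 hbt.2)
      · rw [show hub.1 ω = (MSp.mtop Ω).1 ω from pcf_of_not_mem hωU]
        exact le_top
    have hgLle : gL.1 ≤ᵐ[P] hub.1 := hgL.2 hub hbound
    filter_upwards [hGmbot, hgLeq, hgLle] with ω h1 h2 h3 hb ht2
    rcases eq_or_ne ((F m).1 ω) ⊥ with hFb | hFb
    · rw [h1 hFb]; exact bot_le
    · have hpos : ω ∈ {ω' | ⊥ < (F m).1 ω'} := bot_lt_iff_ne_bot.mpr hFb
      have hωU : ω ∈ U := ⟨⟨hb, ht2⟩, hpos⟩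
      calc (Gm (F m)).1 ω = gL.1 ω := h2 hpos
        _ ≤ hub.1 ω := h3
        _ = m.1 ω := pcf_of_mem hωU
  -- Clause 1, right half: on `{G ⊥ < m < G ⊤}`, `m ≤ Gp (F m)`.
  have clause1R : ∀ᵐ ω ∂P, (G (MSp.mbot Ω)).1 ω < m.1 ω → m.1 ω < (G (MSp.mtop Ω)).1 ω →
      m.1 ω ≤ (Gp (F m)).1 ω := by
    obtain ⟨gR, hgR, hgReq⟩ := (hGp (F m)).2
    have hGptop := (hGp (F m)).1
    set U' : Set Ω := ({ω | (G (MSp.mbot Ω)).1 ω < m.1 ω} ∩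
      {ω | m.1 ω < (G (MSp.mtop Ω)).1 ω}) ∩ {ω | (F m).1 ω < ⊤} with hU'
    have hU'm : MeasurableSet U' :=
      ((measurableSet_lt (G _).2 m.2).inter (measurableSet_lt m.2 (G _).2)).inter
        (measurableSet_lt (F m).2 measurable_const)
    set hlb : MSp Ω := MSp.pc U' hU'm m (MSp.mbot Ω) with hlbdef
    have hbound : ∀ f' ∈ G ''
        {n : MSp Ω | ∀ᵐ ω ∂P, ω ∈ {ω' | (F m).1 ω' < ⊤} → (F m).1 ω < n.1 ω},
        hlb.1 ≤ᵐ[P] f'.1 := by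
      rintro f' ⟨n, hn, rfl⟩
      have hGnt : (G (tright (F m) n)).1 ≤ᵐ[P] (G n).1 := hGmono _ _ (tright_le (F m) n)
      have h1t := (hinv (tright (F m) n)).1
      have hgge := Gge_of (tright (F m) n)
      have hntop := (hinv n).2.2
      have hfb := hFbot_le m
      filter_upwards [hn, hGnt, h1t, hgge, hntop, hfb] with ω hn hGnt h1t hgge hntop hfb
      by_cases hωU : ω ∈ U'
      · rw [show hlb.1 ω = m.1 ω from pcf_of_mem hωU]
        have hFmlt : (F m).1 ω < ⊤ := hωU.2
        have hnF : (F m).1 ω < n.1 ω := hn hFmlt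
        rcases lt_or_ge ((F (MSp.mtop Ω)).1 ω) (n.1 ω) with hcase | hcase
        · rw [hntop hcase]; exact le_top
        · have hbt := tright_between hnF
          have hlow : (F (MSp.mbot Ω)).1 ω < (tright (F m) n).1 ω := lt_of_le_of_lt hfb hbt.1
          have hhigh : (tright (F m) n).1 ω < (F (MSp.mtop Ω)).1 ω := lt_of_lt_of_le hbt.2 hcase
          have h1t' := h1t hlow hhigh
          exact le_trans (hgge h1t'.2 hbt.1) hGnt
      · rw [show hlb.1 ω = (MSp.mbot Ω).1 ω from pcf_of_not_mem hωU]
        exact bot_le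
    have hgRge : hlb.1 ≤ᵐ[P] gR.1 := hgR.2 hlb hbound
    filter_upwards [hGptop, hgReq, hgRge] with ω h1 h2 h3 hb ht2
    rcases eq_or_ne ((F m).1 ω) ⊤ with hFt | hFt
    · rw [h1 hFt]; exact le_top
    · have hpos : ω ∈ {ω' | (F m).1 ω' < ⊤} := lt_top_iff_ne_top.mpr hFt
      have hωU : ω ∈ U' := ⟨⟨hb, ht2⟩, hpos⟩
      calc m.1 ω = hlb.1 ω := (pcf_of_mem hωU).symm
        _ ≤ gR.1 ω := h3
        _ = (Gp (F m)).1 ω := (h2 hpos).symm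
  refine ⟨?_, clause2, clause3⟩
  filter_upwards [clause1L, clause1R] with ω hL hR hb ht
  exact ⟨hL hb ht, hR hb ht⟩
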